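/- Let y = (ε + is, 𝐲) with ε, s ∈ ℝ and 𝐲 ∈ ℝ^{d-1}, and set y² = (ε+is)² + 𝐲·𝐲 ∈ ℂ. Then ε² ≤ |y²| ≤ |ε+is|² + 𝐲·𝐲. -/

import Mathlib

/-- For y = (ε + is, 𝐲) with ε, s ∈ ℝ, 𝐲 ∈ ℝ^{d-1}, and
y² = (ε+is)² + 𝐲·𝐲 ∈ ℂ, one has ε² ≤ |y²| ≤ |ε+is|² + 𝐲·𝐲. -/
theorem stmt_4 (n : ℕ) (ε s : ℝ) (y : Fin n → ℝ) :
    ε ^ 2 ≤ ‖((ε : ℂ) + Complex.I * (s : ℂ)) ^ 2 + ((∑ i, y i ^ 2 : ℝ) : ℂ)‖ ∧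
      ‖((ε : ℂ) + Complex.I * (s : ℂ)) ^ 2 + ((∑ i, y i ^ 2 : ℝ) : ℂ)‖ ≤
        ‖(ε : ℂ) + Complex.I * (s : ℂ)‖ ^ 2 + ∑ i, y i ^ 2 := by
  set Y : ℝ := ∑ i, y i ^ 2 with hY
  have hY0 : 0 ≤ Y := Finset.sum_nonneg fun i _ => sq_nonneg _
  set z : ℂ := ((ε : ℂ) + Complex.I * (s : ℂ)) ^ 2 + (Y : ℂ) with hz
  constructor
  · have h2 : (ε ^ 2) ^ 2 ≤ ‖z‖ ^ 2 := by
      rw [Complex.sq_norm, Complex.normSq_apply]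
      have hre : z.re = ε ^ 2 - s ^ 2 + Y := by
        simp [hz, pow_two, Complex.mul_re, Complex.mul_im]
      have him : z.im = 2 * ε * s := by
        simp [hz, pow_two, Complex.mul_re, Complex.mul_im]
        ring
      rw [hre, him]
      nlinarith [sq_nonneg ε, sq_nonneg s, sq_nonneg (Y - s ^ 2), mul_nonneg (sq_nonneg ε) hY0,
        mul_nonneg (sq_nonneg ε) (sq_nonneg s)]
    nlinarith [norm_nonneg z, sq_nonneg ε]
  · calc ‖z‖ ≤ ‖((ε : ℂ) + Complex.I * (s : ℂ)) ^ 2‖ +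
        ‖(Y : ℂ)‖ := norm_add_le _ _
    _ = ‖(ε : ℂ) + Complex.I * (s : ℂ)‖ ^ 2 + Y := by
        rw [norm_pow, Complex.norm_of_nonneg hY0]
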